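/- For k > 0 and n ≥ 0, the identity (x+k)^2 L_n^{(k)}(x) = (n+1) L̂_{n+2}^k(x) - 2(n+k) L̂_{n+1}^k(x) + (n+k-1) L̂_n^k(x) holds, where L̂_m^k = m L_m^{(k)} - 2(m+k)L_{m-1}^{(k)} + (m+k)L_{m-2}^{(k)} (with L̂_0^k interpreted via the same formula). -/

import Mathlib

open Polynomial

/-- Classical generalized Laguerre polynomials L_n^{(k)}, defined by the
three-term recurrence (n+2) L_{n+2} = (2n+k+3 - x) L_{n+1} - (n+1+k) L_n,
with L_0 = 1, L_1 = k + 1 - x. -/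
noncomputable def genLaguerre (k : ℝ) : ℕ → Polynomial ℝ
  | 0 => 1
  | 1 => Polynomial.C (k + 1) - Polynomial.X
  | n + 2 =>
      Polynomial.C (1 / ((n : ℝ) + 2)) *
        ((Polynomial.C (2 * (n : ℝ) + k + 3) - Polynomial.X) * genLaguerre k (n + 1)
          - Polynomial.C ((n : ℝ) + 1 + k) * genLaguerre k n)

/-- Laguerre polynomial with integer index, zero for negative index. -/
noncomputable def lagZ (k : ℝ) (m : ℤ) : Polynomial ℝ :=
  if 0 ≤ m then genLaguerre k m.toNat else 0

/-- X₁-Laguerre polynomial expressed via the linear combination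
L̂_m^k = m L_m^{(k)} - 2(m+k) L_{m-1}^{(k)} + (m+k) L_{m-2}^{(k)},
interpreted with L of negative index equal to 0 (this also defines L̂_0^k). -/
noncomputable def hatL2 (k : ℝ) (m : ℕ) : Polynomial ℝ :=
  Polynomial.C (m : ℝ) * lagZ k m
    - Polynomial.C (2 * ((m : ℝ) + k)) * lagZ k ((m : ℤ) - 1)
    + Polynomial.C ((m : ℝ) + k) * lagZ k ((m : ℤ) - 2)

lemma lagZ_natCast (k : ℝ) (m : ℕ) : lagZ k (m : ℤ) = genLaguerre k m := by
  simp [lagZ]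

/-- Three-term recurrence rewritten: x·L_{t+1} in terms of L_{t+2}, L_{t+1}, L_t. -/
lemma X_mul_nat (k : ℝ) (t : ℕ) :
    Polynomial.X * genLaguerre k (t+1) =
      Polynomial.C (2*(t:ℝ)+k+3) * genLaguerre k (t+1)
        - Polynomial.C ((t:ℝ)+2) * genLaguerre k (t+2)
        - Polynomial.C ((t:ℝ)+1+k) * genLaguerre k t := by
  have h2 : ((t:ℝ)+2) ≠ 0 := by positivity
  have e : Polynomial.C ((t:ℝ)+2) * genLaguerre k (t+2) =
      (Polynomial.C (2*(t:ℝ)+k+3) - Polynomial.X) * genLaguerre k (t+1)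
        - Polynomial.C ((t:ℝ)+1+k) * genLaguerre k t := by
    rw [show genLaguerre k (t+2) = Polynomial.C (1 / ((t : ℝ) + 2)) *
        ((Polynomial.C (2 * (t : ℝ) + k + 3) - Polynomial.X) * genLaguerre k (t + 1)
          - Polynomial.C ((t : ℝ) + 1 + k) * genLaguerre k t) from rfl,
      ← mul_assoc, ← Polynomial.C_mul, mul_one_div, div_self h2, Polynomial.C_1, one_mul]
  linear_combination e

/-- Recurrence for all integer indices: x·L_m = (2m+k+1)L_m - (m+1)L_{m+1} - (m+k)L_{m-1}. -/
lemma X_mul (k : ℝ) (m : ℤ) :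
    Polynomial.X * lagZ k m =
      Polynomial.C (2*(m:ℝ)+k+1) * lagZ k m
        - Polynomial.C ((m:ℝ)+1) * lagZ k (m+1)
        - Polynomial.C ((m:ℝ)+k) * lagZ k (m-1) := by
  rcases lt_trichotomy m 0 with hm | hm | hm
  · rcases eq_or_lt_of_le (by omega : m ≤ -1) with hm1 | hm1
    · subst hm1
      simp [lagZ, genLaguerre]
    · have h1 : ¬ (0:ℤ) ≤ m := by omega
      have h2 : ¬ (0:ℤ) ≤ m + 1 := by omega
      have h3 : ¬ (0:ℤ) ≤ m - 1 := by omega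
      simp [lagZ, h1, h2, h3, show ¬ (1:ℤ) ≤ m by omega]
  · subst hm
    simp only [lagZ]
    norm_num [genLaguerre]
  · obtain ⟨t, rfl⟩ : ∃ t : ℕ, m = (t:ℤ) + 1 := ⟨(m-1).toNat, by omega⟩
    have h1 : lagZ k ((t:ℤ)+1) = genLaguerre k (t+1) := by
      rw [show (t:ℤ)+1 = ((t+1:ℕ):ℤ) by push_cast; ring, lagZ_natCast]
    have h2 : lagZ k ((t:ℤ)+1+1) = genLaguerre k (t+2) := by
      rw [show (t:ℤ)+1+1 = ((t+2:ℕ):ℤ) by push_cast; ring, lagZ_natCast]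
    have h3 : lagZ k ((t:ℤ)+1-1) = genLaguerre k t := by
      rw [show (t:ℤ)+1-1 = ((t:ℕ):ℤ) by ring, lagZ_natCast]
    rw [h1, h2, h3]
    push_cast
    have := X_mul_nat k t
    simp only [map_add, map_sub, map_mul, map_one, map_ofNat] at this ⊢
    linear_combination this

/-- For k > 0 and n ≥ 0,
(x+k)² L_n^{(k)} = (n+1) L̂_{n+2}^k - 2(n+k) L̂_{n+1}^k + (n+k-1) L̂_n^k. -/
theorem stmt_13 (k : ℝ) (hk : 0 < k) (n : ℕ) :
    (Polynomial.X + Polynomial.C k) ^ 2 * genLaguerre k n =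
      Polynomial.C ((n : ℝ) + 1) * hatL2 k (n + 2)
        - Polynomial.C (2 * ((n : ℝ) + k)) * hatL2 k (n + 1)
        + Polynomial.C ((n : ℝ) + k - 1) * hatL2 k n := by
  have hg : genLaguerre k n = lagZ k (n:ℤ) := (lagZ_natCast k n).symm
  have e0 := X_mul k (n:ℤ)
  have e1 := X_mul k ((n:ℤ)+1)
  have em := X_mul k ((n:ℤ)-1)
  simp only [hatL2, hg]
  push_cast
  rw [show (n:ℤ)+2-1 = (n:ℤ)+1 by ring, show (n:ℤ)+2-2 = (n:ℤ) by ring,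
    show (n:ℤ)+1-1 = (n:ℤ) by ring, show (n:ℤ)+1-2 = (n:ℤ)-1 by ring]
  rw [show (n:ℤ)+1+1 = (n:ℤ)+2 by ring, show (n:ℤ)+1-1 = (n:ℤ) by ring] at e1
  rw [show (n:ℤ)-1+1 = (n:ℤ) by ring, show (n:ℤ)-1-1 = (n:ℤ)-2 by ring] at em
  push_cast at e0 e1 em
  simp only [map_add, map_sub, map_mul, map_one, map_ofNat] at e0 e1 em ⊢
  linear_combination (Polynomial.X + 2*Polynomial.C (n:ℝ) + 3*Polynomial.C k + 1) * e0
    - (Polynomial.C (n:ℝ)+1) * e1 - (Polynomial.C (n:ℝ)+Polynomial.C k) * em
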